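/- Let w̃ : ℝ → ℝ be any function and define p̃(x₁, x₂) = w̃(x₁) + (1 − x₁)·w̃(x₂). Let x₁*, x₂* be real numbers with 0 ≤ x₁* < 1 and x₂* ≤ 1, and suppose p̃(x₁*, x₂*) ≥ p̃(x₁*, x₁*). Then w̃(x₂*) ≥ w̃(x₁*), hence p̃(x, x₂*) ≥ p̃(x, x₁*) for every x ≤ 1; and if in addition p̃(x₁*, x₂*) ≥ p̃(x₂*, x₂*), then p̃(x₁*, x₂*) ≥ p̃(x₂*, x₁*). In other words, the optimality inequality comparing the observed strategy with the swapped strategy (x₂*, x₁*) is implied by the two inequalities comparing it with the degenerate strategies (x₁*, x₁*) and (x₂*, x₂*). -/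
import Mathlib


/-- the optimality inequality against the swapped strategy (x₂*, x₁*)
is implied by the two inequalities against the degenerate strategies. -/
theorem stmt15 (w : ℝ → ℝ) (x₁ x₂ : ℝ)
    (h0 : 0 ≤ x₁) (h1 : x₁ < 1) (h2 : x₂ ≤ 1)
    (p : ℝ → ℝ → ℝ) (hp : p = fun a b => w a + (1 - a) * w b)
    (hopt1 : p x₁ x₂ ≥ p x₁ x₁) :
    w x₂ ≥ w x₁ ∧ (∀ x : ℝ, x ≤ 1 → p x x₂ ≥ p x x₁) ∧
      (p x₁ x₂ ≥ p x₂ x₂ → p x₁ x₂ ≥ p x₂ x₁) := by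
  subst hp
  simp only at hopt1 ⊢
  have hw : w x₂ ≥ w x₁ := by
    have h1' : 0 < 1 - x₁ := by linarith
    nlinarith
  refine ⟨hw, fun x hx => ?_, fun h => ?_⟩
  · nlinarith [mul_nonneg (by linarith : (0:ℝ) ≤ 1 - x) (by linarith : (0:ℝ) ≤ w x₂ - w x₁)]
  · nlinarith [mul_nonneg (by linarith : (0:ℝ) ≤ 1 - x₂) (by linarith : (0:ℝ) ≤ w x₂ - w x₁)]
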